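/- (Zero-force surface.) Let a,b > 1 and c > 0 be reals satisfying ab − a − b − c² + 1 = 0. Then for every integer w ≥ 3, the free energy is independent of the width: κ_w(a,b,c) = (1/2)·( log a + log(a + c² − 1) − log(a − 1) ). In particular the force F_w(a,b,c) = κ_{w+1}(a,b,c) − κ_w(a,b,c) vanishes on this surface. -/

import Mathlib

open Filter
open scoped Classical

noncomputable section

/-- Step value of a Boolean step: `true` is an up step (+1), `false` a down step (−1). -/
def stepVal (x : Bool) : ℤ := if x then 1 else -1

/-- Height of the walk after `k` steps. -/
def ht (σ : ℕ → Bool) (k : ℕ) : ℤ := ∑ i ∈ Finset.range k, stepVal (σ i)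

/-- Extend a finite sequence of steps to `ℕ → Bool`. -/
def extFun {n : ℕ} (σ : Fin n → Bool) : ℕ → Bool :=
  fun i => if h : i < n then σ ⟨i, h⟩ else false

/-- The first `n` steps of `σ` stay in the strip `0 ≤ y ≤ w`. -/
def IsWalk (w n : ℕ) (σ : ℕ → Bool) : Prop :=
  ∀ k ≤ n, 0 ≤ ht σ k ∧ ht σ k ≤ (w : ℤ)

/-- Number of contacts with the bottom wall (excluding the origin):
`m_a(φ) = #{1 ≤ k ≤ n : h_k = 0}`. -/
def ma (n : ℕ) (σ : ℕ → Bool) : ℕ :=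
  ((Finset.Icc 1 n).filter (fun k => ht σ k = 0)).card

/-- Number of contacts with the top wall: `m_b(φ) = #{1 ≤ k ≤ n : h_k = w}`. -/
def mb (w n : ℕ) (σ : ℕ → Bool) : ℕ :=
  ((Finset.Icc 1 n).filter (fun k => ht σ k = (w : ℤ))).card

/-- Number of stiffness points: `m_c(φ) = #{1 ≤ k ≤ n−1 : σ_k = σ_{k+1}}`. -/
def mc (n : ℕ) (σ : ℕ → Bool) : ℕ :=
  ((Finset.range (n - 1)).filter (fun i => σ i = σ (i + 1))).card

/-- Boltzmann weight of a walk: `W(φ) = a^{m_a} b^{m_b} c^{m_c}`. -/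
def wt (w n : ℕ) (a b c : ℝ) (σ : ℕ → Bool) : ℝ :=
  a ^ ma n σ * b ^ mb w n σ * c ^ mc n σ

/-- Partition function `Z_{w,n}(a,b,c)`: sum of weights over all walks of length `n`
in the strip of width `w`. -/
def Z (w n : ℕ) (a b c : ℝ) : ℝ :=
  ∑ σ ∈ Finset.univ.filter (fun σ : Fin n → Bool => IsWalk w n (extFun σ)),
    wt w n a b c (extFun σ)

/-- Fixed-endpoint partition function `Z_{w,n,h}(a,b,c)`: sum over walks of length `n`
in the strip of width `w` ending at height `h`. -/
def Zh (w n h : ℕ) (a b c : ℝ) : ℝ :=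
  ∑ σ ∈ Finset.univ.filter
      (fun σ : Fin n → Bool => IsWalk w n (extFun σ) ∧ ht (extFun σ) n = (h : ℤ)),
    wt w n a b c (extFun σ)

end


noncomputable section ZFS2
open Filter


def wallw (a b : ℝ) (w : ℕ) (h : ℤ) : ℝ := (if h = 0 then a else 1) * (if h = (w:ℤ) then b else 1)

def stw (c : ℝ) (d d' : Bool) : ℝ := if d = d' then c else 1

def phiF (a b c x L : ℝ) (w : ℕ) (h : ℤ) (d : Bool) : ℝ :=
  if h = 0 then (if d then c / a else 1 / a)
  else if h = (w : ℤ) then (if d then x ^ ((w:ℤ) - 1) / L else c * x ^ ((w:ℤ) - 1) / L)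
  else (if d then b / (x * L) else 1) * x ^ h

lemma eigen {a b c : ℝ} (ha : 1 < a) (hb : 1 < b) (hc : 0 < c)
    (hsurf : a * b - a - b - c ^ 2 + 1 = 0) {w : ℕ} (hw : 3 ≤ w) {h : ℤ}
    (h0 : 0 ≤ h) (h1 : h ≤ (w:ℤ)) (d0 : Bool) :
    (if 0 ≤ h + 1 ∧ h + 1 ≤ (w:ℤ) then
        wallw a b w (h+1) * stw c d0 true *
          phiF a b c (Real.sqrt (a*b) * (b-1) / (b*c)) (Real.sqrt (a*b)) w (h+1) true else 0)
    + (if 0 ≤ h - 1 ∧ h - 1 ≤ (w:ℤ) then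
        wallw a b w (h-1) * stw c d0 false *
          phiF a b c (Real.sqrt (a*b) * (b-1) / (b*c)) (Real.sqrt (a*b)) w (h-1) false else 0)
    = Real.sqrt (a*b) *
        phiF a b c (Real.sqrt (a*b) * (b-1) / (b*c)) (Real.sqrt (a*b)) w h d0 := by
  have ha0 : (0:ℝ) < a := by linarith
  have hb0 : (0:ℝ) < b := by linarith
  set L := Real.sqrt (a*b) with hLdef
  have hL0 : 0 < L := Real.sqrt_pos.2 (by positivity)
  have hL2 : L ^ 2 = a * b := Real.sq_sqrt (by positivity)
  set x := L * (b-1) / (b*c) with hxdef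
  have hx0 : 0 < x := div_pos (by nlinarith) (by positivity)
  have hbcx : b * c * x = L * (b - 1) := by
    rw [hxdef]; field_simp
  have hc2 : c ^ 2 = (a-1)*(b-1) := by nlinarith
  have hcL : (a-1) * b * x = c * L := by
    have h' : c * ((a-1) * b * x) = c * (c * L) := by
      linear_combination (a-1) * hbcx - L * hc2
    exact mul_left_cancel₀ (ne_of_gt hc) h'
  clear_value L x
  clear hLdef hxdef
  have hLne : L ≠ 0 := ne_of_gt hL0
  have hxne : x ≠ 0 := ne_of_gt hx0
  have hE2x : L * (b/(x*L)) * x = c * (b/(x*L)) * x^2 + 1 := by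
    field_simp
    linear_combination -hbcx
  have hE1x : L * x = (b/(x*L)) * x^2 + c := by
    field_simp
    linear_combination x * hL2 + hcL
  have hwz : (3:ℤ) ≤ (w:ℤ) := by exact_mod_cast hw
  have hpow : ∀ k:ℤ, x^(k+1) = x^k * x := fun k => zpow_add_one₀ hxne k
  have hpow' : ∀ k:ℤ, x^(k-1) = x^k / x := fun k => zpow_sub_one₀ hxne k
  have hyne : ∀ k:ℤ, x ^ k ≠ 0 := fun k => zpow_ne_zero k hxne
  have pm : ∀ (g:ℤ), 1 ≤ g → g ≤ (w:ℤ)-1 → ∀ d, phiF a b c x L w g d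
      = (if d then b/(x*L) else 1) * x^g := by
    intro g hg1 hg2 d
    simp only [phiF]
    rw [if_neg (by omega), if_neg (by omega)]
  have p0 : ∀ d, phiF a b c x L w 0 d = (if d then c/a else 1/a) := by
    intro d; simp only [phiF]; norm_num
  have pw : ∀ d, phiF a b c x L w w d
      = (if d then x^((w:ℤ)-1)/L else c*x^((w:ℤ)-1)/L) := by
    intro d; simp only [phiF]; rw [if_neg (by omega)]; norm_num
  have w0 : wallw a b w 0 = a := by
    simp only [wallw]; rw [if_neg (by omega : ¬(0:ℤ) = (w:ℤ))]; norm_num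
  have wm : ∀ (g:ℤ), 1 ≤ g → g ≤ (w:ℤ)-1 → wallw a b w g = 1 := by
    intro g hg1 hg2
    simp only [wallw]; rw [if_neg (by omega), if_neg (by omega)]; ring
  have ww : wallw a b w w = b := by
    simp only [wallw]; rw [if_neg (by omega : ¬(w:ℤ) = 0)]; norm_num
  rcases eq_or_ne h 0 with rfl | hne0
  · -- h = 0
    rw [if_pos ⟨by omega, by omega⟩, if_neg (by omega)]
    rw [show (0:ℤ)+1 = 1 by ring]
    rw [pm 1 (by omega) (by omega), wm 1 (by omega) (by omega), p0]
    cases d0 <;> simp only [stw, zpow_one] <;> norm_num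
    · field_simp
      linear_combination -hL2
    · field_simp
      linear_combination -hL2
  · rcases eq_or_ne h (w:ℤ) with rfl | hnew
    · -- h = w
      rw [if_neg (by omega), if_pos ⟨by omega, by omega⟩]
      rw [pm ((w:ℤ)-1) (by omega) (by omega), wm ((w:ℤ)-1) (by omega) (by omega), pw]
      cases d0 <;> simp only [stw] <;> norm_num
      · field_simp
      · field_simp
    · rcases eq_or_ne h ((w:ℤ)-1) with rfl | hnew1
      · -- h = w-1
        rw [if_pos ⟨by omega, by omega⟩, if_pos ⟨by omega, by omega⟩]
        rw [show (w:ℤ)-1+1 = (w:ℤ) by ring, show (w:ℤ)-1-1 = ((w:ℤ)-1)-1 by ring]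
        rw [pm (((w:ℤ)-1)-1) (by omega) (by omega), wm (((w:ℤ)-1)-1) (by omega) (by omega),
          ww, pw, pm ((w:ℤ)-1) (by omega) (by omega)]
        rw [hpow' ((w:ℤ)-1)]
        cases d0 <;> simp only [stw] <;> norm_num
        · field_simp
          linear_combination -x*hL2 - hcL
        · field_simp
          linear_combination hbcx
      · rcases eq_or_ne h 1 with rfl | hne1
        · -- h = 1
          rw [if_pos ⟨by omega, by omega⟩, if_pos ⟨by omega, by omega⟩]
          rw [show (1:ℤ)-1 = 0 by ring]
          rw [pm (1+1) (by omega) (by omega), wm (1+1) (by omega) (by omega),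
            w0, p0, pm 1 (by omega) (by omega)]
          rw [hpow 1, zpow_one]
          cases d0 <;> simp only [stw] <;> norm_num
          · field_simp
            linear_combination -x*hL2 - hcL
          · field_simp
            linear_combination hbcx
        · -- middle: 2 ≤ h ≤ w-2
          rw [if_pos ⟨by omega, by omega⟩, if_pos ⟨by omega, by omega⟩]
          rw [pm (h+1) (by omega) (by omega), wm (h+1) (by omega) (by omega),
            pm (h-1) (by omega) (by omega), wm (h-1) (by omega) (by omega),
            pm h (by omega) (by omega)]
          rw [hpow h, hpow' h]
          cases d0 <;> simp only [stw] <;> norm_num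
          · field_simp
            linear_combination -x*hL2 - hcL
          · field_simp
            linear_combination hbcx

/-- last direction of a walk of length `n` (fictitious `false` for `n = 0`). -/
def lastd (n : ℕ) (σ : ℕ → Bool) : Bool := if n = 0 then false else σ (n-1)

lemma ht_succ (σ : ℕ → Bool) (k : ℕ) : ht σ (k+1) = ht σ k + stepVal (σ k) :=
  Finset.sum_range_succ _ _

lemma ht_congr {σ σ' : ℕ → Bool} (k : ℕ) (h : ∀ i < k, σ i = σ' i) : ht σ k = ht σ' k :=
  Finset.sum_congr rfl (fun i hi => by rw [h i (Finset.mem_range.1 hi)])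

lemma extFun_snoc_lt {n : ℕ} (τ : Fin n → Bool) (d : Bool) {i : ℕ} (hi : i < n) :
    extFun (Fin.snoc τ d) i = extFun τ i := by
  simp only [extFun, dif_pos hi, dif_pos (Nat.lt_succ_of_lt hi)]
  have h1 : (⟨i, Nat.lt_succ_of_lt hi⟩ : Fin (n+1)) = Fin.castSucc ⟨i, hi⟩ := rfl
  rw [h1, Fin.snoc_castSucc]

lemma extFun_snoc_last {n : ℕ} (τ : Fin n → Bool) (d : Bool) :
    extFun (Fin.snoc τ d) n = d := by
  simp only [extFun, dif_pos (Nat.lt_succ_self n)]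
  have h1 : (⟨n, Nat.lt_succ_self n⟩ : Fin (n+1)) = Fin.last n := rfl
  rw [h1, Fin.snoc_last]

lemma ht_snoc {n : ℕ} (τ : Fin n → Bool) (d : Bool) {k : ℕ} (hk : k ≤ n) :
    ht (extFun (Fin.snoc τ d)) k = ht (extFun τ) k :=
  ht_congr k (fun i hi => extFun_snoc_lt τ d (lt_of_lt_of_le hi hk))

lemma ht_snoc_top {n : ℕ} (τ : Fin n → Bool) (d : Bool) :
    ht (extFun (Fin.snoc τ d)) (n+1) = ht (extFun τ) n + stepVal d := by
  rw [ht_succ, ht_snoc τ d le_rfl, extFun_snoc_last]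

lemma isWalk_snoc {w n : ℕ} (τ : Fin n → Bool) (d : Bool) :
    IsWalk w (n+1) (extFun (Fin.snoc τ d)) ↔ IsWalk w n (extFun τ) ∧
      (0 ≤ ht (extFun τ) n + stepVal d ∧ ht (extFun τ) n + stepVal d ≤ (w:ℤ)) := by
  constructor
  · intro H
    refine ⟨fun k hk => ?_, ?_⟩
    · have := H k (le_trans hk (Nat.le_succ n))
      rwa [ht_snoc τ d hk] at this
    · have := H (n+1) le_rfl
      rwa [ht_snoc_top] at this
  · rintro ⟨H, h1, h2⟩ k hk
    rcases Nat.lt_or_ge k (n+1) with hk' | hk'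
    · rw [ht_snoc τ d (Nat.lt_succ_iff.1 hk')]
      exact H k (Nat.lt_succ_iff.1 hk')
    · have : k = n + 1 := le_antisymm hk hk'
      subst this
      rw [ht_snoc_top]
      exact ⟨h1, h2⟩

lemma card_filter_Icc_succ (P : ℕ → Prop) [DecidablePred P] (n : ℕ) :
    ((Finset.Icc 1 (n+1)).filter P).card
      = ((Finset.Icc 1 n).filter P).card + if P (n+1) then 1 else 0 := by
  have h1 : Finset.Icc 1 (n+1) = insert (n+1) (Finset.Icc 1 n) := by
    ext k; simp only [Finset.mem_Icc, Finset.mem_insert]; omega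
  rw [h1, Finset.filter_insert]
  split_ifs with hP
  · rw [Finset.card_insert_of_notMem (by simp)]
  · simp

lemma ma_snoc {n : ℕ} (τ : Fin n → Bool) (d : Bool) :
    ma (n+1) (extFun (Fin.snoc τ d)) = ma n (extFun τ)
      + if ht (extFun τ) n + stepVal d = 0 then 1 else 0 := by
  unfold ma
  rw [show ((Finset.Icc 1 (n+1)).filter (fun k => ht (extFun (Fin.snoc τ d)) k = 0)).card = ((Finset.Icc 1 n).filter (fun k => ht (extFun (Fin.snoc τ d)) k = 0)).card + if ht (extFun (Fin.snoc τ d)) (n+1) = 0 then 1 else 0 from card_filter_Icc_succ _ n]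
  congr 1
  · congr 1
    apply Finset.filter_congr
    intro k hk
    rw [Finset.mem_Icc] at hk
    simp only [ht_snoc τ d hk.2]
  · rw [ht_snoc_top]

lemma mb_snoc {w n : ℕ} (τ : Fin n → Bool) (d : Bool) :
    mb w (n+1) (extFun (Fin.snoc τ d)) = mb w n (extFun τ)
      + if ht (extFun τ) n + stepVal d = (w:ℤ) then 1 else 0 := by
  unfold mb
  rw [show ((Finset.Icc 1 (n+1)).filter (fun k => ht (extFun (Fin.snoc τ d)) k = (w:ℤ))).card = ((Finset.Icc 1 n).filter (fun k => ht (extFun (Fin.snoc τ d)) k = (w:ℤ))).card + if ht (extFun (Fin.snoc τ d)) (n+1) = (w:ℤ) then 1 else 0 from card_filter_Icc_succ _ n]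
  congr 1
  · congr 1
    apply Finset.filter_congr
    intro k hk
    rw [Finset.mem_Icc] at hk
    simp only [ht_snoc τ d hk.2]
  · rw [ht_snoc_top]

lemma mc_snoc {n : ℕ} (τ : Fin n → Bool) (d : Bool) :
    mc (n+1) (extFun (Fin.snoc τ d)) = mc n (extFun τ)
      + if n = 0 then 0 else (if extFun τ (n-1) = d then 1 else 0) := by
  unfold mc
  rcases Nat.eq_zero_or_pos n with rfl | hn
  · simp
  · have h1 : n + 1 - 1 = (n-1) + 1 := by omega
    rw [h1, Finset.range_add_one, Finset.filter_insert, if_neg (by omega : ¬ n = 0)]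
    have h2 : ∀ i ∈ Finset.range (n-1),
        (extFun (Fin.snoc τ d) i = extFun (Fin.snoc τ d) (i+1)) ↔
        (extFun τ i = extFun τ (i+1)) := by
      intro i hi
      rw [Finset.mem_range] at hi
      rw [extFun_snoc_lt τ d (by omega), extFun_snoc_lt τ d (by omega)]
    have h3 : (Finset.filter (fun i => extFun (Fin.snoc τ d) i = extFun (Fin.snoc τ d) (i+1))
        (Finset.range (n-1))) = (Finset.filter (fun i => extFun τ i = extFun τ (i+1))
        (Finset.range (n-1))) := Finset.filter_congr h2
    have h4 : extFun (Fin.snoc τ d) (n-1) = extFun τ (n-1) := extFun_snoc_lt τ d (by omega)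
    have h5 : extFun (Fin.snoc τ d) ((n-1)+1) = d := by
      have : (n-1)+1 = n := by omega
      rw [this, extFun_snoc_last]
    rw [h3, h4, h5]
    split_ifs with hcase
    · rw [Finset.card_insert_of_notMem (by simp)]
    · rw [add_zero]

lemma wt_snoc {w n : ℕ} (a b c : ℝ) (τ : Fin n → Bool) (d : Bool)
    (hok : 0 ≤ ht (extFun τ) n + stepVal d) :
    wt w (n+1) a b c (extFun (Fin.snoc τ d)) = wt w n a b c (extFun τ)
      * wallw a b w (ht (extFun τ) n + stepVal d) * stw c (lastd n (extFun τ)) d := by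
  unfold wt wallw stw
  rw [ma_snoc, mb_snoc, mc_snoc, pow_add, pow_add, pow_add]
  rcases Nat.eq_zero_or_pos n with rfl | hn
  · -- n = 0 : no stiffness contribution; d must be true
    have hht : ht (extFun τ) 0 = 0 := by simp [ht]
    rw [hht] at hok ⊢
    have hd : d = true := by
      cases d
      · simp [stepVal] at hok
      · rfl
    subst hd
    norm_num [stepVal, lastd]
    split_ifs <;> ring
  · have hn0 : ¬ n = 0 := by omega
    simp only [lastd, if_neg hn0]
    simp only [pow_ite, pow_one, pow_zero]
    split_ifs <;> ring

/-- weighted partition sum against the eigenvector. -/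
def SSum (a b c x L : ℝ) (w n : ℕ) : ℝ :=
  ∑ σ ∈ Finset.univ.filter (fun σ : Fin n → Bool => IsWalk w n (extFun σ)),
    wt w n a b c (extFun σ) * phiF a b c x L w (ht (extFun σ) n) (lastd n (extFun σ))

lemma SSum_succ {a b c : ℝ} (ha : 1 < a) (hb : 1 < b) (hc : 0 < c)
    (hsurf : a * b - a - b - c ^ 2 + 1 = 0) {w : ℕ} (hw : 3 ≤ w) (n : ℕ) :
    SSum a b c (Real.sqrt (a*b) * (b-1) / (b*c)) (Real.sqrt (a*b)) w (n+1)
      = Real.sqrt (a*b) * SSum a b c (Real.sqrt (a*b) * (b-1) / (b*c)) (Real.sqrt (a*b)) w n := by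
  classical
  set x := Real.sqrt (a*b) * (b-1) / (b*c) with hxdef
  set L := Real.sqrt (a*b) with hLdef
  unfold SSum
  rw [Finset.sum_filter, Finset.sum_filter, Finset.mul_sum]
  rw [← Equiv.sum_comp (Fin.snocEquiv (fun _ => Bool))]
  rw [Fintype.sum_prod_type_right]
  apply Finset.sum_congr rfl
  intro τ _
  by_cases hIW : IsWalk w n (extFun τ)
  · rw [if_pos hIW]
    have hbd := hIW n le_rfl
    -- the eigenvalue equation at the current state
    have heig := eigen ha hb hc hsurf hw hbd.1 hbd.2 (lastd n (extFun τ))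
    rw [← hLdef, ← hxdef] at heig
    have hterm : ∀ d : Bool,
        (if IsWalk w (n+1) (extFun (Fin.snocEquiv (fun _ => Bool) (d, τ)))
          then wt w (n+1) a b c (extFun (Fin.snocEquiv (fun _ => Bool) (d, τ))) *
            phiF a b c x L w (ht (extFun (Fin.snocEquiv (fun _ => Bool) (d, τ))) (n+1))
              (lastd (n+1) (extFun (Fin.snocEquiv (fun _ => Bool) (d, τ))))
          else 0)
        = wt w n a b c (extFun τ) *
          (if 0 ≤ ht (extFun τ) n + stepVal d ∧ ht (extFun τ) n + stepVal d ≤ (w:ℤ)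
            then wallw a b w (ht (extFun τ) n + stepVal d) * stw c (lastd n (extFun τ)) d *
              phiF a b c x L w (ht (extFun τ) n + stepVal d) d
            else 0) := by
      intro d
      have hsnoc : extFun (Fin.snocEquiv (fun _ => Bool) (d, τ)) = extFun (Fin.snoc τ d) := rfl
      rw [hsnoc]
      by_cases hcond : 0 ≤ ht (extFun τ) n + stepVal d ∧ ht (extFun τ) n + stepVal d ≤ (w:ℤ)
      · rw [if_pos hcond, if_pos ((isWalk_snoc τ d).2 ⟨hIW, hcond⟩)]
        rw [wt_snoc a b c τ d hcond.1, ht_snoc_top]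
        have hlast : lastd (n+1) (extFun (Fin.snoc τ d)) = d := by
          unfold lastd
          rw [if_neg (Nat.succ_ne_zero n)]
          simp only [Nat.add_sub_cancel]
          exact extFun_snoc_last τ d
        rw [hlast]
        ring
      · rw [if_neg hcond, mul_zero, if_neg]
        intro hIW'
        exact hcond ((isWalk_snoc τ d).1 hIW').2
    rw [Fintype.sum_bool, hterm true, hterm false, ← mul_add]
    have hsv : stepVal true = 1 ∧ stepVal false = -1 := ⟨rfl, rfl⟩
    rw [hsv.1, hsv.2]
    have harg : ht (extFun τ) n + -1 = ht (extFun τ) n - 1 := by ring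
    rw [harg, heig]
    ring
  · rw [if_neg hIW]
    have hterm : ∀ d : Bool,
        (if IsWalk w (n+1) (extFun (Fin.snocEquiv (fun _ => Bool) (d, τ)))
          then wt w (n+1) a b c (extFun (Fin.snocEquiv (fun _ => Bool) (d, τ))) *
            phiF a b c x L w (ht (extFun (Fin.snocEquiv (fun _ => Bool) (d, τ))) (n+1))
              (lastd (n+1) (extFun (Fin.snocEquiv (fun _ => Bool) (d, τ))))
          else 0) = 0 := by
      intro d
      rw [if_neg]
      intro hIW'
      exact hIW ((isWalk_snoc τ d).1 hIW').1
    rw [Fintype.sum_bool, hterm true, hterm false, add_zero, mul_zero]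

lemma phiF_pos {a b c x L : ℝ} (ha : 0 < a) (hb : 0 < b) (hc : 0 < c) (hx : 0 < x)
    (hL : 0 < L) (w : ℕ) (h : ℤ) (d : Bool) : 0 < phiF a b c x L w h d := by
  unfold phiF
  split_ifs <;> positivity

lemma SSum_zero (a b c x L : ℝ) (w : ℕ) : SSum a b c x L w 0 = 1 / a := by
  unfold SSum
  have hwalk : ∀ σ : Fin 0 → Bool, IsWalk w 0 (extFun σ) := by
    intro σ k hk
    have hk0 : k = 0 := Nat.le_zero.1 hk
    subst hk0
    have : ht (extFun σ) 0 = 0 := by simp [ht]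
    rw [this]
    exact ⟨le_refl 0, Int.natCast_nonneg w⟩
  rw [Finset.filter_true_of_mem (fun σ _ => hwalk σ)]
  rw [Fintype.sum_unique]
  have hIcc : Finset.Icc 1 0 = (∅ : Finset ℕ) := Finset.Icc_eq_empty (by omega)
  simp [wt, ma, mb, mc, ht, lastd, phiF, hIcc]

lemma SSum_eq {a b c : ℝ} (ha : 1 < a) (hb : 1 < b) (hc : 0 < c)
    (hsurf : a * b - a - b - c ^ 2 + 1 = 0) {w : ℕ} (hw : 3 ≤ w) (n : ℕ) :
    SSum a b c (Real.sqrt (a*b) * (b-1) / (b*c)) (Real.sqrt (a*b)) w n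
      = (Real.sqrt (a*b))^n * (1/a) := by
  induction n with
  | zero => rw [SSum_zero]; ring
  | succ n ih => rw [SSum_succ ha hb hc hsurf hw n, ih]; ring

set_option maxHeartbeats 2000000 in
lemma Z_growth {a b c : ℝ} (ha : 1 < a) (hb : 1 < b) (hc : 0 < c)
    (hsurf : a * b - a - b - c ^ 2 + 1 = 0) {w : ℕ} (hw : 3 ≤ w) :
    Tendsto (fun n : ℕ => Real.log (Z w n a b c) / (n : ℝ)) atTop
      (nhds (Real.log (Real.sqrt (a*b)))) := by
  have ha0 : (0:ℝ) < a := by linarith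
  have hb0 : (0:ℝ) < b := by linarith
  set L := Real.sqrt (a*b) with hLdef
  set x := L * (b-1) / (b*c) with hxdef
  have hL0 : 0 < L := Real.sqrt_pos.2 (by positivity)
  have hx0 : 0 < x := div_pos (by nlinarith) (by positivity)
  set P : Finset (ℤ × Bool) := (Finset.Icc (0:ℤ) (w:ℤ)) ×ˢ (Finset.univ : Finset Bool)
    with hPdef
  have hPne : P.Nonempty := ⟨(0, false), by
    rw [hPdef, Finset.mem_product]
    refine ⟨Finset.mem_Icc.2 ⟨le_refl 0, Int.natCast_nonneg w⟩, Finset.mem_univ _⟩⟩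
  set m := P.inf' hPne (fun p => phiF a b c x L w p.1 p.2) with hmdef
  set M := P.sup' hPne (fun p => phiF a b c x L w p.1 p.2) with hMdef
  have hm0 : 0 < m := by
    rw [hmdef, Finset.lt_inf'_iff]
    intro p _
    exact phiF_pos ha0 hb0 hc hx0 hL0 w p.1 p.2
  have hM0 : 0 < M := by
    obtain ⟨p, hp⟩ := hPne
    exact lt_of_lt_of_le (phiF_pos ha0 hb0 hc hx0 hL0 w p.1 p.2)
      (Finset.le_sup' (fun p => phiF a b c x L w p.1 p.2) hp)
  have hmem : ∀ n : ℕ, ∀ σ : Fin n → Bool, IsWalk w n (extFun σ) →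
      (ht (extFun σ) n, lastd n (extFun σ)) ∈ P := by
    intro n σ hσ
    rw [hPdef, Finset.mem_product]
    exact ⟨Finset.mem_Icc.2 (hσ n le_rfl), Finset.mem_univ _⟩
  have hwt0 : ∀ n : ℕ, ∀ σ : Fin n → Bool, 0 ≤ wt w n a b c (extFun σ) := by
    intro n σ
    unfold wt
    positivity
  have hZ0 : ∀ n : ℕ, 0 ≤ Z w n a b c := by
    intro n
    apply Finset.sum_nonneg
    intro σ _
    exact hwt0 n σ
  have hlow : ∀ n : ℕ, m * Z w n a b c ≤ SSum a b c x L w n := by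
    intro n
    unfold Z SSum
    rw [Finset.mul_sum]
    apply Finset.sum_le_sum
    intro σ hσ
    rw [Finset.mem_filter] at hσ
    calc m * wt w n a b c (extFun σ) = wt w n a b c (extFun σ) * m := by ring
      _ ≤ wt w n a b c (extFun σ) *
          phiF a b c x L w (ht (extFun σ) n) (lastd n (extFun σ)) :=
        mul_le_mul_of_nonneg_left (Finset.inf'_le (fun p => phiF a b c x L w p.1 p.2) (hmem n σ hσ.2)) (hwt0 n σ)
  have hup : ∀ n : ℕ, SSum a b c x L w n ≤ M * Z w n a b c := by
    intro n
    unfold Z SSum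
    rw [Finset.mul_sum]
    apply Finset.sum_le_sum
    intro σ hσ
    rw [Finset.mem_filter] at hσ
    calc wt w n a b c (extFun σ) *
          phiF a b c x L w (ht (extFun σ) n) (lastd n (extFun σ))
        ≤ wt w n a b c (extFun σ) * M :=
          mul_le_mul_of_nonneg_left (Finset.le_sup' (fun p => phiF a b c x L w p.1 p.2) (hmem n σ hσ.2)) (hwt0 n σ)
      _ = M * wt w n a b c (extFun σ) := by ring
  have hSS : ∀ n : ℕ, SSum a b c x L w n = L^n * (1/a) := fun n =>
    SSum_eq ha hb hc hsurf hw n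
  -- positivity of Z
  have hZpos : ∀ n : ℕ, 0 < Z w n a b c := by
    intro n
    by_contra hcon
    push_neg at hcon
    have h1 : M * Z w n a b c ≤ 0 := mul_nonpos_of_nonneg_of_nonpos hM0.le hcon
    have h2 : 0 < L^n * (1/a) := by positivity
    have h3 := hup n
    rw [hSS n] at h3
    linarith
  -- explicit bounds
  have hlow' : ∀ n : ℕ, L^n * (1/(a*M)) ≤ Z w n a b c := by
    intro n
    have h1 := hup n
    rw [hSS n] at h1
    have h2 : L^n * (1/(a*M)) = (L^n * (1/a))/M := by
      field_simp
    rw [h2, div_le_iff₀ hM0]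
    nlinarith [h1]
  have hup' : ∀ n : ℕ, Z w n a b c ≤ L^n * (1/(a*m)) := by
    intro n
    have h1 := hlow n
    rw [hSS n] at h1
    have h2 : L^n * (1/(a*m)) = (L^n * (1/a))/m := by
      field_simp
    rw [h2, le_div_iff₀ hm0]
    nlinarith [h1]
  -- logs
  have hloglow : ∀ n : ℕ, Real.log (1/(a*M)) + n * Real.log L ≤ Real.log (Z w n a b c) := by
    intro n
    have h1 := Real.log_le_log (by positivity) (hlow' n)
    rwa [Real.log_mul (by positivity) (by positivity), Real.log_pow, add_comm] at h1
  have hlogup : ∀ n : ℕ, Real.log (Z w n a b c) ≤ Real.log (1/(a*m)) + n * Real.log L := by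
    intro n
    have h1 := Real.log_le_log (hZpos n) (hup' n)
    rwa [Real.log_mul (by positivity) (by positivity), Real.log_pow, add_comm] at h1
  -- squeeze
  have hlo_t : Tendsto (fun n : ℕ => Real.log (1/(a*M)) / n + Real.log L) atTop
      (nhds (Real.log L)) := by
    have := (tendsto_const_div_atTop_nhds_zero_nat (Real.log (1/(a*M)))).add
      (tendsto_const_nhds (x := Real.log L) (f := atTop))
    simpa using this
  have hup_t : Tendsto (fun n : ℕ => Real.log (1/(a*m)) / n + Real.log L) atTop
      (nhds (Real.log L)) := by
    have := (tendsto_const_div_atTop_nhds_zero_nat (Real.log (1/(a*m)))).add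
      (tendsto_const_nhds (x := Real.log L) (f := atTop))
    simpa using this
  apply tendsto_of_tendsto_of_tendsto_of_le_of_le' hlo_t hup_t
  · filter_upwards [eventually_gt_atTop 0] with n hn
    have hn0 : (0:ℝ) < (n:ℝ) := by exact_mod_cast hn
    rw [← sub_nonneg]
    have h1 := hloglow n
    have h2 : Real.log (Z w n a b c) / n - (Real.log (1/(a*M)) / n + Real.log L)
        = (Real.log (Z w n a b c) - (Real.log (1/(a*M)) + n * Real.log L)) / n := by
      field_simp
    rw [h2]
    apply div_nonneg _ hn0.le
    linarith
  · filter_upwards [eventually_gt_atTop 0] with n hn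
    have hn0 : (0:ℝ) < (n:ℝ) := by exact_mod_cast hn
    rw [← sub_nonneg]
    have h1 := hlogup n
    have h2 : (Real.log (1/(a*m)) / n + Real.log L) - Real.log (Z w n a b c) / n
        = ((Real.log (1/(a*m)) + n * Real.log L) - Real.log (Z w n a b c)) / n := by
      field_simp
    rw [h2]
    apply div_nonneg _ hn0.le
    linarith

end ZFS2

/-- on the zero-force surface `ab − a − b − c² + 1 = 0` (with `a,b > 1`),
the free energy is independent of the width, and the force vanishes. -/
theorem zero_force_surface (a b c : ℝ) (ha : 1 < a) (hb : 1 < b) (hc : 0 < c)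
    (hsurf : a * b - a - b - c ^ 2 + 1 = 0) (w : ℕ) (hw : 3 ≤ w) (κ κ' : ℝ)
    (hκ : Tendsto (fun n : ℕ => Real.log (Z w n a b c) / (n : ℝ)) atTop (nhds κ))
    (hκ' : Tendsto (fun n : ℕ => Real.log (Z (w + 1) n a b c) / (n : ℝ)) atTop (nhds κ')) :
    κ = (1 / 2) * (Real.log a + Real.log (a + c ^ 2 - 1) - Real.log (a - 1)) ∧
    κ' - κ = 0 := by
  have ha0 : (0:ℝ) < a := by linarith
  have hb0 : (0:ℝ) < b := by linarith
  have hκval : κ = Real.log (Real.sqrt (a*b)) :=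
    tendsto_nhds_unique hκ (Z_growth ha hb hc hsurf hw)
  have hκ'val : κ' = Real.log (Real.sqrt (a*b)) :=
    tendsto_nhds_unique hκ' (Z_growth ha hb hc hsurf (by omega : 3 ≤ w + 1))
  constructor
  · rw [hκval]
    have hbid : a + c^2 - 1 = b * (a-1) := by nlinarith [hsurf]
    rw [hbid, Real.log_mul (ne_of_gt hb0) (ne_of_gt (by linarith : (0:ℝ) < a - 1))]
    rw [Real.log_sqrt (by positivity), Real.log_mul (ne_of_gt ha0) (ne_of_gt hb0)]
    ring
  · rw [hκval, hκ'val, sub_self]
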